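/- The restriction of G to [0,∞) is a strictly increasing continuous bijection from [0,∞) onto [0, m̄); denoting its inverse by G⁻¹, the function L(a) := -λ F(G⁻¹(a/λ)) defined for a ∈ [0, λ m̄) is strictly convex and is differentiable on (0, λ m̄) with L'(a) = -1/G⁻¹(a/λ). -/

import Mathlib

open MeasureTheory Filter Set

/-- The restriction of `G` to `[0,∞)` is a strictly increasing continuous bijection from
`[0,∞)` onto `[0, m̄)`; denoting its inverse by `G⁻¹`, the function
`L(a) := -λ F(G⁻¹(a/λ))` defined for `a ∈ [0, λ m̄)` is strictly convex and is
differentiable on `(0, λ m̄)` with `L'(a) = -1/G⁻¹(a/λ)`. -/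
theorem stmt_5 (f F G : ℝ → ℝ) (mbar lam : ℝ)
    (hf_cont : Continuous f)
    (hf_nonpos : ∀ p ≤ (0 : ℝ), f p = 0)
    (hf_pos : ∀ p : ℝ, 0 < p → 0 < f p)
    (hf_int : (∫ p in Set.Ioi (0 : ℝ), f p) = 1)
    (hf_tail : Filter.Tendsto (fun p : ℝ => p ^ 3 * f p) Filter.atTop (nhds 0))
    (hmean_int : MeasureTheory.IntegrableOn (fun p : ℝ => p * f p) (Set.Ioi 0))
    (hmbar : mbar = ∫ p in Set.Ioi (0 : ℝ), p * f p)
    (hF : ∀ b : ℝ, F b = ∫ p in (0 : ℝ)..b, f p)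
    (hG : ∀ b : ℝ, G b = ∫ p in (0 : ℝ)..b, p * f p)
    (hlam : 0 < lam) :
    StrictMonoOn G (Set.Ici 0) ∧ ContinuousOn G (Set.Ici 0) ∧
      Set.BijOn G (Set.Ici 0) (Set.Ico 0 mbar) ∧
      ∀ Ginv : ℝ → ℝ,
        (∀ a ∈ Set.Ico (0 : ℝ) mbar, Ginv a ∈ Set.Ici (0 : ℝ) ∧ G (Ginv a) = a) →
        StrictConvexOn ℝ (Set.Ico 0 (lam * mbar))
            (fun a : ℝ => -lam * F (Ginv (a / lam))) ∧
          ∀ a ∈ Set.Ioo (0 : ℝ) (lam * mbar),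
            HasDerivAt (fun a' : ℝ => -lam * F (Ginv (a' / lam)))
              (-1 / Ginv (a / lam)) a := by
  have hg_cont : Continuous (fun p : ℝ => p * f p) := continuous_id.mul hf_cont
  have hg_nonneg : ∀ p : ℝ, 0 ≤ p * f p := by
    intro p
    rcases le_or_gt p 0 with h | h
    · simp [hf_nonpos p h]
    · exact (mul_pos h (hf_pos p h)).le
  have hg_pos : ∀ p : ℝ, 0 < p → 0 < p * f p := fun p hp => mul_pos hp (hf_pos p hp)
  have hGfun : G = fun b => ∫ p in (0:ℝ)..b, p * f p := funext hG
  have hG_deriv : ∀ b : ℝ, HasDerivAt G (b * f b) b := by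
    intro b; rw [hGfun]
    exact (hg_cont.integral_hasStrictDerivAt 0 b).hasDerivAt
  have hF_deriv : ∀ b : ℝ, HasDerivAt F (f b) b := by
    intro b; rw [funext hF]
    exact (hf_cont.integral_hasStrictDerivAt 0 b).hasDerivAt
  have hG_cont : Continuous G :=
    continuous_iff_continuousAt.2 fun b => (hG_deriv b).continuousAt
  have hF_cont : Continuous F :=
    continuous_iff_continuousAt.2 fun b => (hF_deriv b).continuousAt
  have hG0 : G 0 = 0 := by rw [hG]; simp
  -- strict monotonicity
  have hG_mono : StrictMonoOn G (Set.Ici 0) := by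
    intro x hx y hy hxy
    have hadd : (∫ p in (0:ℝ)..x, p * f p) + ∫ p in x..y, p * f p
        = ∫ p in (0:ℝ)..y, p * f p :=
      intervalIntegral.integral_add_adjacent_intervals
        (hg_cont.intervalIntegrable _ _) (hg_cont.intervalIntegrable _ _)
    have hpos : 0 < ∫ p in x..y, p * f p :=
      intervalIntegral.intervalIntegral_pos_of_pos_on (hg_cont.intervalIntegrable _ _)
        (fun p hp => hg_pos p (lt_of_le_of_lt hx hp.1)) hxy
    rw [hG x, hG y]
    linarith
  -- G b < mbar for b ≥ 0
  have hG_lt : ∀ b : ℝ, 0 ≤ b → G b < mbar := by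
    intro b hb
    have hsplit : mbar = G b + ∫ p in Set.Ioi b, p * f p := by
      rw [hmbar, hG b, intervalIntegral.integral_of_le hb,
        ← MeasureTheory.setIntegral_union (Set.Ioc_disjoint_Ioi le_rfl) measurableSet_Ioi
          (hmean_int.mono_set Set.Ioc_subset_Ioi_self)
          (hmean_int.mono_set (Set.Ioi_subset_Ioi hb)),
        Set.Ioc_union_Ioi_eq_Ioi hb]
    have htail : 0 < ∫ p in Set.Ioi b, p * f p := by
      rw [MeasureTheory.setIntegral_pos_iff_support_of_nonneg_ae
        (Filter.Eventually.of_forall hg_nonneg)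
        (hmean_int.mono_set (Set.Ioi_subset_Ioi hb))]
      have hsub : Set.Ioi b ⊆ Function.support (fun p : ℝ => p * f p) ∩ Set.Ioi b :=
        fun p hp => ⟨(hg_pos p (lt_of_le_of_lt hb hp)).ne', hp⟩
      calc (0 : ENNReal) < volume (Set.Ioi b) := by simp [Real.volume_Ioi]
        _ ≤ _ := measure_mono hsub
    linarith
  have hmbar_pos : 0 < mbar := hG0 ▸ hG_lt 0 le_rfl
  -- tendsto mbar
  have hG_tendsto : Filter.Tendsto G Filter.atTop (nhds mbar) := by
    rw [hGfun, hmbar]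
    exact MeasureTheory.intervalIntegral_tendsto_integral_Ioi 0 hmean_int tendsto_id
  -- maps to
  have hmaps : Set.MapsTo G (Set.Ici 0) (Set.Ico 0 mbar) := by
    intro x hx
    refine ⟨?_, hG_lt x hx⟩
    rcases eq_or_lt_of_le (Set.mem_Ici.mp hx) with h | h
    · rw [← h, hG0]
    · rw [← hG0]; exact (hG_mono self_mem_Ici hx h).le
  have hsurj : Set.SurjOn G (Set.Ici 0) (Set.Ico 0 mbar) := by
    intro y hy
    obtain ⟨b, hb0, hby⟩ : ∃ b : ℝ, 0 ≤ b ∧ y < G b := by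
      have h1 : ∀ᶠ b in Filter.atTop, y < G b :=
        hG_tendsto.eventually (eventually_gt_nhds hy.2)
      obtain ⟨b, hb1, hb2⟩ := (h1.and (eventually_ge_atTop (0:ℝ))).exists
      exact ⟨b, hb2, hb1⟩
    have := intermediate_value_Icc hb0 hG_cont.continuousOn
      (by rw [hG0]; exact ⟨hy.1, hby.le⟩)
    obtain ⟨x, hx, hxy⟩ := this
    exact ⟨x, hx.1, hxy⟩
  refine ⟨hG_mono, hG_cont.continuousOn, ⟨hmaps, hG_mono.injOn, hsurj⟩, ?_⟩
  intro Ginv hGinv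
  -- continuity of Ginv
  have hGinv_cont : ∀ a ∈ Set.Ico (0:ℝ) mbar,
      ContinuousWithinAt Ginv (Set.Ico (0:ℝ) mbar) a := by
    intro a ha
    obtain ⟨hx0, hGx⟩ := hGinv a ha
    rw [ContinuousWithinAt, tendsto_order]
    constructor
    · intro c hc
      rcases lt_or_ge c 0 with hc0 | hc0
      · filter_upwards [self_mem_nhdsWithin] with a' ha'
        exact hc0.trans_le (hGinv a' ha').1
      · have hGc : G c < a := by rw [← hGx]; exact hG_mono hc0 hx0 hc
        filter_upwards [mem_nhdsWithin_of_mem_nhds (Ioi_mem_nhds hGc),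
          self_mem_nhdsWithin] with a' h1 h2
        have h3 := hGinv a' h2
        rw [← hG_mono.lt_iff_lt hc0 h3.1, h3.2]
        exact h1
    · intro c hc
      have hc0 : (0:ℝ) ≤ c := le_trans hx0 hc.le
      have hGc : a < G c := by rw [← hGx]; exact hG_mono hx0 hc0 hc
      filter_upwards [mem_nhdsWithin_of_mem_nhds (Iio_mem_nhds hGc),
        self_mem_nhdsWithin] with a' h1 h2
      have h3 := hGinv a' h2
      rw [← hG_mono.lt_iff_lt h3.1 hc0, h3.2]
      exact h1
  -- Ginv strictly monotone
  have hGinv_lt : ∀ u ∈ Set.Ico (0:ℝ) mbar, ∀ v ∈ Set.Ico (0:ℝ) mbar, u < v →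
      Ginv u < Ginv v := by
    intro u hu v hv huv
    have h1 := hGinv u hu
    have h2 := hGinv v hv
    rw [← hG_mono.lt_iff_lt h1.1 h2.1, h1.2, h2.2]
    exact huv
  have hmapsdiv : ∀ a ∈ Set.Ico (0:ℝ) (lam * mbar), a / lam ∈ Set.Ico (0:ℝ) mbar := by
    intro a ha
    exact ⟨div_nonneg ha.1 hlam.le, by rw [div_lt_iff₀ hlam]; nlinarith [ha.2]⟩
  have hmapsdiv' : ∀ a ∈ Set.Ioo (0:ℝ) (lam * mbar), a / lam ∈ Set.Ioo (0:ℝ) mbar := by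
    intro a ha
    exact ⟨div_pos ha.1 hlam, by rw [div_lt_iff₀ hlam]; nlinarith [ha.2]⟩
  -- derivative
  have hL_deriv : ∀ a ∈ Set.Ioo (0:ℝ) (lam * mbar),
      HasDerivAt (fun a' : ℝ => -lam * F (Ginv (a' / lam))) (-1 / Ginv (a / lam)) a := by
    intro a ha
    have hal : a / lam ∈ Set.Ioo (0:ℝ) mbar := hmapsdiv' a ha
    have hal' : a / lam ∈ Set.Ico (0:ℝ) mbar := ⟨hal.1.le, hal.2⟩
    obtain ⟨hx0, hGx⟩ := hGinv (a / lam) hal'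
    have hx_pos : 0 < Ginv (a / lam) := by
      rw [← hG_mono.lt_iff_lt self_mem_Ici hx0, hG0, hGx]
      exact hal.1
    have hIco_nhds : Set.Ico (0:ℝ) mbar ∈ nhds (a / lam) :=
      Filter.mem_of_superset (Ioo_mem_nhds hal.1 hal.2) Set.Ioo_subset_Ico_self
    have hGinv_deriv : HasDerivAt Ginv (Ginv (a / lam) * f (Ginv (a / lam)))⁻¹ (a / lam) := by
      apply HasDerivAt.of_local_left_inverse
        ((hGinv_cont _ hal').continuousAt hIco_nhds)
        (hG_deriv (Ginv (a / lam)))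
        (hg_pos _ hx_pos).ne'
      filter_upwards [hIco_nhds] with y hy
      exact (hGinv y hy).2
    have hdiv : HasDerivAt (fun a' : ℝ => a' / lam) (1 / lam) a := by
      simpa using (hasDerivAt_id a).div_const lam
    have h1 : HasDerivAt (fun a' : ℝ => Ginv (a' / lam))
        ((Ginv (a / lam) * f (Ginv (a / lam)))⁻¹ * (1 / lam)) a :=
      hGinv_deriv.comp a hdiv
    have h2 : HasDerivAt (fun a' : ℝ => F (Ginv (a' / lam)))
        (f (Ginv (a / lam)) * ((Ginv (a / lam) * f (Ginv (a / lam)))⁻¹ * (1 / lam))) a :=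
      (hF_deriv (Ginv (a / lam))).comp a h1
    have h3 := h2.const_mul (-lam)
    refine h3.congr_deriv ?_
    have hfx : f (Ginv (a / lam)) ≠ 0 := (hf_pos _ hx_pos).ne'
    have hxne : Ginv (a / lam) ≠ 0 := hx_pos.ne'
    have hlne : lam ≠ 0 := hlam.ne'
    field_simp
  -- convexity
  refine ⟨?_, hL_deriv⟩
  apply StrictMonoOn.strictConvexOn_of_deriv (convex_Ico _ _)
  · apply continuousOn_const.mul
    have hGinvOn : ContinuousOn Ginv (Set.Ico (0:ℝ) mbar) := fun a ha => hGinv_cont a ha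
    exact hF_cont.comp_continuousOn
      (hGinvOn.comp (continuousOn_id.div_const lam) hmapsdiv)
  · rw [interior_Ico]
    intro a ha b hb hab
    rw [(hL_deriv a ha).deriv, (hL_deriv b hb).deriv]
    have ha' := hmapsdiv' a ha
    have hb' := hmapsdiv' b hb
    have hxa : 0 < Ginv (a / lam) := by
      rw [← hG_mono.lt_iff_lt self_mem_Ici (hGinv _ ⟨ha'.1.le, ha'.2⟩).1, hG0,
        (hGinv _ ⟨ha'.1.le, ha'.2⟩).2]
      exact ha'.1
    have hxab : Ginv (a / lam) < Ginv (b / lam) :=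
      hGinv_lt _ ⟨ha'.1.le, ha'.2⟩ _ ⟨hb'.1.le, hb'.2⟩ (by gcongr)
    have hxb : 0 < Ginv (b / lam) := hxa.trans hxab
    rw [div_lt_div_iff₀ hxa hxb]
    nlinarith
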